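/- Let A₁₁, A₁₂, A₂₂ be Riccati data on a complex separable Hilbert space H with diag{A₁₁} − A₂₂ ≫ 0, let (sₙ) be the successive approximations, and let s̲ and s̄ be the strong limits of the even and odd subsequences. If s̲ = s̄, then this common limit s satisfies diag{s} − A₂₂ ≫ 0 and solves the Riccati equation s = A₁₁ + A₁₂(diag{s} − A₂₂)⁻¹A₁₂*; that is, ρ_min² := s̲ = s̄ is a minimal solution in the sense that the inequality s ≥ A₁₁ + A₁₂(diag{s} − A₂₂)⁻¹A₁₂* holds with equality. -/

import Mathlib

open MeasureTheory ContinuousLinearMap Filter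
open scoped ENNReal NNReal Topology

noncomputable section

/-- `ℓ²(H)`: the Hilbert space of square-summable sequences in `H`, indexed by `ℕ`
(index `k : ℕ` corresponds to the `(k+1)`-st entry in the paper's `1`-based indexing). -/
abbrev l2 (H : Type*) [NormedAddCommGroup H] [InnerProductSpace ℂ H] : Type _ :=
  lp (fun _ : ℕ => H) 2

variable {H : Type*} [NormedAddCommGroup H] [InnerProductSpace ℂ H]

lemma memℓp_diag (q : H →L[ℂ] H) (ξ : l2 H) : Memℓp (fun k => q (ξ k)) 2 := by
  have h2 : (0:ℝ) < (2 : ℝ≥0∞).toReal := by norm_num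
  apply memℓp_gen
  have hs : Summable (fun k => ‖q‖ ^ (2 : ℝ≥0∞).toReal * ‖ξ k‖ ^ (2 : ℝ≥0∞).toReal) :=
    ((lp.memℓp ξ).summable h2).mul_left _
  refine Summable.of_nonneg_of_le (fun k => ?_) (fun k => ?_) hs
  · positivity
  · rw [← Real.mul_rpow (norm_nonneg _) (norm_nonneg _)]
    exact Real.rpow_le_rpow (norm_nonneg _) (q.le_opNorm _) (by norm_num)

/-- `diag{q}`: the bounded block-diagonal operator on `ℓ²(H)` acting componentwise,
`(diag{q} ξ)ₖ = q (ξₖ)`. -/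
def diagOp (q : H →L[ℂ] H) : l2 H →L[ℂ] l2 H :=
  LinearMap.mkContinuous
    { toFun := fun ξ => ⟨fun k => q (ξ k), memℓp_diag q ξ⟩
      map_add' := fun ξ η => by ext k; simp [lp.coeFn_add] <;> rfl
      map_smul' := fun c ξ => by ext k; simp [lp.coeFn_smul] }
    ‖q‖
    (by
      intro ξ
      have h2 : (0:ℝ) < (2 : ℝ≥0∞).toReal := by norm_num
      refine lp.norm_le_of_tsum_le h2 (by positivity) ?_
      have hξ : ‖ξ‖ ^ (2 : ℝ≥0∞).toReal = ∑' k, ‖ξ k‖ ^ (2 : ℝ≥0∞).toReal :=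
        lp.norm_rpow_eq_tsum h2 ξ
      have hsum : Summable (fun k => ‖ξ k‖ ^ (2 : ℝ≥0∞).toReal) := (lp.memℓp ξ).summable h2
      calc ∑' k, ‖(fun k => q (ξ k)) k‖ ^ (2 : ℝ≥0∞).toReal
          ≤ ∑' k, ‖q‖ ^ (2 : ℝ≥0∞).toReal * ‖ξ k‖ ^ (2 : ℝ≥0∞).toReal := by
            refine Summable.tsum_le_tsum (fun k => ?_) ?_ (hsum.mul_left _)
            · rw [← Real.mul_rpow (norm_nonneg _) (norm_nonneg _)]
              exact Real.rpow_le_rpow (norm_nonneg _) (q.le_opNorm _) (by norm_num)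
            · refine Summable.of_nonneg_of_le (fun k => ?_) (fun k => ?_)
                (hsum.mul_left (‖q‖ ^ (2 : ℝ≥0∞).toReal))
              · positivity
              · rw [← Real.mul_rpow (norm_nonneg _) (norm_nonneg _)]
                exact Real.rpow_le_rpow (norm_nonneg _) (q.le_opNorm _) (by norm_num)
        _ = (‖q‖ * ‖ξ‖) ^ (2 : ℝ≥0∞).toReal := by
            rw [tsum_mul_left, ← hξ, Real.mul_rpow (norm_nonneg _) (norm_nonneg _)])

@[simp] lemma diagOp_apply (q : H →L[ℂ] H) (ξ : l2 H) (k : ℕ) :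
    (diagOp q ξ) k = q (ξ k) := rfl

/-- An operator is *strongly positive* (written `ρ ≫ 0` in the paper) if `δ • I ≤ ρ`
(Loewner order) for some `δ > 0`.  A strongly positive operator is boundedly invertible. -/
def StronglyPositive {E : Type*} [NormedAddCommGroup E] [InnerProductSpace ℂ E]
    [CompleteSpace E] (ρ : E →L[ℂ] E) : Prop :=
  ∃ δ : ℝ, 0 < δ ∧ δ • (1 : E →L[ℂ] E) ≤ ρ

variable [CompleteSpace H]

/-- The Riccati map `ℱ(s) = A₁₁ + A₁₂ (diag{s} − A₂₂)⁻¹ A₁₂*`.  Here `Ring.inverse` is the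
genuine inverse whenever `diag{s} − A₂₂` is boundedly invertible, which is guaranteed when
`diag{s} − A₂₂ ≫ 0`. -/
def riccatiMap (A11 : H →L[ℂ] H) (A12 : l2 H →L[ℂ] H) (A22 : l2 H →L[ℂ] l2 H)
    (s : H →L[ℂ] H) : H →L[ℂ] H :=
  A11 + A12 ∘L Ring.inverse (diagOp s - A22) ∘L ContinuousLinearMap.adjoint A12

/-- The successive approximations `s₀ = A₁₁`, `s_{n+1} = ℱ(sₙ)`. -/
def riccatiSeq (A11 : H →L[ℂ] H) (A12 : l2 H →L[ℂ] H) (A22 : l2 H →L[ℂ] l2 H) :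
    ℕ → (H →L[ℂ] H)
  | 0 => A11
  | n + 1 => riccatiMap A11 A12 A22 (riccatiSeq A11 A12 A22 n)

end

section AuxOps
variable {E : Type*} [NormedAddCommGroup E] [InnerProductSpace ℂ E] [CompleteSpace E]

local notation "⟪" x ", " y "⟫" => @inner ℂ _ _ x y

lemma sp_inner {T : E →L[ℂ] E} {δ : ℝ} (h : δ • (1 : E →L[ℂ] E) ≤ T) (x : E) :
    δ * ‖x‖ ^ 2 ≤ RCLike.re ⟪T x, x⟫ := by
  have h0 := ((ContinuousLinearMap.le_def _ _).mp h).2 x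
  rw [ContinuousLinearMap.reApplyInnerSelf_apply] at h0
  simp only [ContinuousLinearMap.sub_apply, ContinuousLinearMap.smul_apply,
    ContinuousLinearMap.one_apply, inner_sub_left, map_sub,
    RCLike.real_smul_eq_coe_smul (K := ℂ), inner_smul_left, RCLike.conj_ofReal,
    RCLike.mul_re, RCLike.ofReal_re, RCLike.ofReal_im, inner_self_eq_norm_sq] at h0
  nlinarith [inner_self_eq_norm_sq (𝕜 := ℂ) x]

lemma sp_isSelfAdjoint {T : E →L[ℂ] E} {δ : ℝ} (h : δ • (1 : E →L[ℂ] E) ≤ T) :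
    IsSelfAdjoint T := by
  have h1 := ((ContinuousLinearMap.le_def _ _).mp h).1
  have h2 : IsSelfAdjoint (δ • (1 : E →L[ℂ] E)) := by
    rw [IsSelfAdjoint, star_smul, star_trivial, star_one]
  have e : T = (T - δ • (1 : E →L[ℂ] E)) + δ • (1 : E →L[ℂ] E) := by abel
  rw [e]
  exact (isSelfAdjoint_iff_isSymmetric.mpr h1).add h2

lemma sp_isUnit {T : E →L[ℂ] E} {δ : ℝ} (hδ : 0 < δ) (h : δ • (1 : E →L[ℂ] E) ≤ T) :
    IsUnit T := by
  refine isUnit_of_forall_le_norm_inner_map T (c := δ.toNNReal)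
    (Real.toNNReal_pos.mpr hδ) fun x => ?_
  have := sp_inner h x
  rw [Real.coe_toNNReal _ hδ.le]
  nlinarith [le_trans (le_abs_self (RCLike.re ⟪T x, x⟫)) (RCLike.abs_re_le_norm ⟪T x, x⟫)]

lemma sp_norm_inverse_apply_le {T : E →L[ℂ] E} {δ : ℝ} (hδ : 0 < δ)
    (h : δ • (1 : E →L[ℂ] E) ≤ T) (y : E) :
    ‖Ring.inverse T y‖ ≤ δ⁻¹ * ‖y‖ := by
  have hu := sp_isUnit hδ h
  set x := Ring.inverse T y with hx
  have hTx : T x = y := by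
    have := Ring.mul_inverse_cancel T hu
    calc T x = (T * Ring.inverse T) y := rfl
    _ = y := by rw [this]; rfl
  have h1 : δ * ‖x‖ ^ 2 ≤ RCLike.re ⟪T x, x⟫ := sp_inner h x
  have h2 : RCLike.re ⟪T x, x⟫ ≤ ‖y‖ * ‖x‖ := by
    refine le_trans (le_trans (le_abs_self _) (RCLike.abs_re_le_norm _)) ?_
    rw [hTx]; exact norm_inner_le_norm _ _
  have h3 : δ * ‖x‖ ≤ ‖y‖ := by
    rcases eq_or_lt_of_le (norm_nonneg x) with h0 | h0
    · rw [← h0]; simpa using norm_nonneg y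
    · nlinarith
  calc ‖x‖ = δ⁻¹ * (δ * ‖x‖) := by field_simp
  _ ≤ δ⁻¹ * ‖y‖ := by
      have : (0:ℝ) ≤ δ⁻¹ := inv_nonneg.mpr hδ.le
      exact mul_le_mul_of_nonneg_left h3 this

lemma sp_inverse_isPositive {T : E →L[ℂ] E} {δ : ℝ} (hδ : 0 < δ)
    (h : δ • (1 : E →L[ℂ] E) ≤ T) :
    (Ring.inverse T).IsPositive := by
  have hu := sp_isUnit hδ h
  have hsa : IsSelfAdjoint T := sp_isSelfAdjoint h
  have hRT : Ring.inverse T * T = 1 := Ring.inverse_mul_cancel T hu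
  have hTR : T * Ring.inverse T = 1 := Ring.mul_inverse_cancel T hu
  have hRsa : IsSelfAdjoint (Ring.inverse T) := by
    have hstar : star (Ring.inverse T) * T = 1 := by
      have := congrArg star hTR
      rwa [star_mul, hsa.star_eq, star_one] at this
    show star (Ring.inverse T) = Ring.inverse T
    calc star (Ring.inverse T) = star (Ring.inverse T) * (T * Ring.inverse T) := by
          rw [hTR, mul_one]
    _ = (star (Ring.inverse T) * T) * Ring.inverse T := by rw [mul_assoc]
    _ = Ring.inverse T := by rw [hstar, one_mul]
  refine ⟨isSelfAdjoint_iff_isSymmetric.mp hRsa, fun y => ?_⟩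
  rw [ContinuousLinearMap.reApplyInnerSelf_apply]
  set x := Ring.inverse T y with hx
  have hTx : T x = y := by
    calc T x = (T * Ring.inverse T) y := rfl
    _ = y := by rw [hTR]; rfl
  have : RCLike.re ⟪x, y⟫ = RCLike.re ⟪T x, x⟫ := by
    rw [← hTx, inner_re_symm]
  show 0 ≤ RCLike.re ⟪x, y⟫
  rw [this]
  exact le_trans (by positivity) (sp_inner h x)

end AuxOps

section DiagAux
variable {H : Type*} [NormedAddCommGroup H] [InnerProductSpace ℂ H]

local notation "⟪" x ", " y "⟫" => @inner ℂ _ _ x y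

lemma diagOp_sub' (p q : H →L[ℂ] H) : diagOp (p - q) = diagOp p - diagOp q := by
  ext ξ k
  simp [lp.coeFn_sub]

variable [CompleteSpace H]

lemma diagOp_isPositive {q : H →L[ℂ] H} (hq : q.IsPositive) : (diagOp q).IsPositive := by
  constructor
  · intro ξ η
    rw [lp.inner_eq_tsum, lp.inner_eq_tsum]
    refine tsum_congr fun k => ?_
    simpa using hq.1 (ξ k) (η k)
  · intro ξ
    rw [ContinuousLinearMap.reApplyInnerSelf_apply, lp.inner_eq_tsum,
      RCLike.re_tsum ℂ (lp.summable_inner _ _)]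
    refine tsum_nonneg fun k => ?_
    simpa [ContinuousLinearMap.reApplyInnerSelf_apply] using hq.2 (ξ k)

lemma diagOp_le_diagOp {p q : H →L[ℂ] H} (h : p ≤ q) : diagOp p ≤ diagOp q := by
  rw [ContinuousLinearMap.le_def] at h ⊢
  rw [← diagOp_sub']
  exact diagOp_isPositive h

end DiagAux


section RiccAux
variable {H : Type*} [NormedAddCommGroup H] [InnerProductSpace ℂ H] [CompleteSpace H]
variable (A11 : H →L[ℂ] H) (A12 : l2 H →L[ℂ] H) (A22 : l2 H →L[ℂ] l2 H)

lemma gap_of_ge {δ : ℝ} (hgap : δ • (1 : l2 H →L[ℂ] l2 H) ≤ diagOp A11 - A22)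
    {t : H →L[ℂ] H} (ht : A11 ≤ t) :
    δ • (1 : l2 H →L[ℂ] l2 H) ≤ diagOp t - A22 := by
  refine le_trans hgap ?_
  rw [ContinuousLinearMap.le_def]
  have e : (diagOp t - A22) - (diagOp A11 - A22) = diagOp (t - A11) := by
    rw [diagOp_sub']; abel
  rw [e]
  exact diagOp_isPositive ((ContinuousLinearMap.le_def _ _).mp ht)

lemma riccati_step_isPositive {δ : ℝ} (hδ : 0 < δ) {t : H →L[ℂ] H}
    (ht : δ • (1 : l2 H →L[ℂ] l2 H) ≤ diagOp t - A22) :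
    (A12 ∘L Ring.inverse (diagOp t - A22) ∘L ContinuousLinearMap.adjoint A12).IsPositive :=
  (sp_inverse_isPositive hδ ht).conj_adjoint A12

lemma riccati_seq_props {δ : ℝ} (hδ : 0 < δ)
    (hA11sa : IsSelfAdjoint A11)
    (hgap : δ • (1 : l2 H →L[ℂ] l2 H) ≤ diagOp A11 - A22) :
    ∀ n, IsSelfAdjoint (riccatiSeq A11 A12 A22 n) ∧ A11 ≤ riccatiSeq A11 A12 A22 n := by
  intro n
  induction n with
  | zero => exact ⟨hA11sa, le_refl _⟩
  | succ n ih =>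
    have hgt := gap_of_ge A11 A22 hgap ih.2
    have hpos := riccati_step_isPositive A12 A22 hδ hgt
    constructor
    · show IsSelfAdjoint (riccatiMap A11 A12 A22 (riccatiSeq A11 A12 A22 n))
      exact hA11sa.add hpos.isSelfAdjoint
    · show A11 ≤ riccatiMap A11 A12 A22 (riccatiSeq A11 A12 A22 n)
      rw [ContinuousLinearMap.le_def, riccatiMap, add_sub_cancel_left]
      exact hpos

end RiccAux


section ConvAux
variable {H : Type*} [NormedAddCommGroup H] [InnerProductSpace ℂ H]

lemma summable_norm_sq (η : l2 H) : Summable (fun k => ‖η k‖ ^ 2) := by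
  have h2 : (0:ℝ) < (2 : ℝ≥0∞).toReal := by norm_num
  have := (lp.memℓp η).summable h2
  simpa [Real.rpow_two] using this

lemma norm_eq_sqrt_tsum (ξ : l2 H) : ‖ξ‖ = Real.sqrt (∑' k, ‖ξ k‖ ^ 2) := by
  have h2 : (0:ℝ) < (2 : ℝ≥0∞).toReal := by norm_num
  have := lp.norm_rpow_eq_tsum h2 ξ
  simp only [show ((2 : ℝ≥0∞).toReal) = (2:ℝ) by norm_num, Real.rpow_two] at this
  rw [← this, Real.sqrt_sq (norm_nonneg _)]

lemma diag_tendsto_zero (T : ℕ → H →L[ℂ] H) {C : ℝ}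
    (hC : ∀ n, ‖T n‖ ≤ C)
    (hT : ∀ x : H, Tendsto (fun n => T n x) atTop (𝓝 0)) (η : l2 H) :
    Tendsto (fun n => diagOp (T n) η) atTop (𝓝 0) := by
  rw [tendsto_zero_iff_norm_tendsto_zero]
  have hnorm : ∀ n, ‖diagOp (T n) η‖ = Real.sqrt (∑' k, ‖T n (η k)‖ ^ 2) := by
    intro n
    rw [norm_eq_sqrt_tsum]
    simp only [diagOp_apply]
  have htsum : Tendsto (fun n => ∑' k, ‖T n (η k)‖ ^ 2) atTop (𝓝 0) := by
    have h0 : (0:ℝ) = ∑' _ : ℕ, (0:ℝ) := by simp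
    rw [h0]
    refine tendsto_tsum_of_dominated_convergence
      (bound := fun k => C ^ 2 * ‖η k‖ ^ 2) ((summable_norm_sq η).mul_left _) (fun k => ?_) ?_
    · have h1 : Tendsto (fun n => ‖T n (η k)‖) atTop (𝓝 0) :=
        tendsto_norm_zero.comp (hT (η k))
      simpa using h1.pow 2
    · filter_upwards with n k
      have h1 := (T n).le_opNorm (η k)
      have h3 : ‖T n (η k)‖ ≤ C * ‖η k‖ :=
        h1.trans (mul_le_mul_of_nonneg_right (hC n) (norm_nonneg _))
      rw [Real.norm_eq_abs, abs_of_nonneg (by positivity)]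
      calc ‖T n (η k)‖ ^ 2 ≤ (C * ‖η k‖) ^ 2 := by
            exact pow_le_pow_left₀ (norm_nonneg _) h3 2
      _ = C ^ 2 * ‖η k‖ ^ 2 := by ring
  have hfin : Tendsto (fun n => Real.sqrt (∑' k, ‖T n (η k)‖ ^ 2)) atTop (𝓝 (Real.sqrt 0)) :=
    (Real.continuous_sqrt.tendsto _).comp htsum
  rw [Real.sqrt_zero] at hfin
  simpa [hnorm] using hfin

variable [CompleteSpace H]

lemma unif_bound {T : ℕ → H →L[ℂ] H} {s : H →L[ℂ] H}
    (h : ∀ x, Tendsto (fun n => T n x) atTop (𝓝 (s x))) :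
    ∃ C, ∀ n, ‖T n - s‖ ≤ C := by
  apply banach_steinhaus
  intro x
  have h1 : Tendsto (fun n => ‖(T n - s) x‖) atTop (𝓝 ‖s x - s x‖) := by
    simp only [ContinuousLinearMap.sub_apply]
    exact ((h x).sub tendsto_const_nhds).norm
  obtain ⟨C, hC⟩ := h1.bddAbove_range
  exact ⟨C, fun n => hC (Set.mem_range_self n)⟩

end ConvAux

/-- **Corollary 2.3.**  If the strong limits of the even and odd successive approximations
coincide (`s̲ = s̄ = s`), then `diag{s} − A₂₂ ≫ 0` and the common limit solves the
Riccati equation: `s = A₁₁ + A₁₂(diag{s} − A₂₂)⁻¹A₁₂*` (so the minimality inequality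
`s ≥ A₁₁ + A₁₂(diag{s} − A₂₂)⁻¹A₁₂*` holds with equality, i.e. `ρ_min² = s`). -/
theorem riccati_equal_limits_solve_equation
    {H : Type*} [NormedAddCommGroup H] [InnerProductSpace ℂ H] [CompleteSpace H]
    [TopologicalSpace.SeparableSpace H]
    (A11 : H →L[ℂ] H) (A12 : l2 H →L[ℂ] H) (A22 : l2 H →L[ℂ] l2 H)
    (hA11sa : IsSelfAdjoint A11) (hA22sa : IsSelfAdjoint A22)
    (hgap : StronglyPositive (diagOp A11 - A22))
    (s : H →L[ℂ] H) (hs : IsSelfAdjoint s)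
    (heven : ∀ x : H, Filter.Tendsto (fun n => riccatiSeq A11 A12 A22 (2 * n) x)
      Filter.atTop (𝓝 (s x)))
    (hodd : ∀ x : H, Filter.Tendsto (fun n => riccatiSeq A11 A12 A22 (2 * n + 1) x)
      Filter.atTop (𝓝 (s x))) :
    StronglyPositive (diagOp s - A22) ∧ riccatiMap A11 A12 A22 s = s := by
  obtain ⟨δ, hδ, hgap'⟩ := hgap
  set Sq := riccatiSeq A11 A12 A22 with hSq
  have props := riccati_seq_props A11 A12 A22 hδ hA11sa hgap'
  -- the limit dominates A₁₁
  have hA11s : A11 ≤ s := by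
    rw [ContinuousLinearMap.le_def]
    refine ⟨isSelfAdjoint_iff_isSymmetric.mp (hs.sub hA11sa), fun x => ?_⟩
    rw [ContinuousLinearMap.reApplyInnerSelf_apply]
    have h1 : Tendsto (fun n => (Sq (2*n) - A11) x) atTop (𝓝 ((s - A11) x)) := by
      simp only [ContinuousLinearMap.sub_apply]
      exact (heven x).sub tendsto_const_nhds
    have h2 : Tendsto (fun n => RCLike.re (inner ℂ ((Sq (2*n) - A11) x) x : ℂ)) atTop
        (𝓝 (RCLike.re (inner ℂ ((s - A11) x) x : ℂ))) :=
      (RCLike.continuous_re.tendsto _).comp (h1.inner tendsto_const_nhds)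
    refine ge_of_tendsto' h2 fun n => ?_
    have h3 := ((ContinuousLinearMap.le_def _ _).mp (props (2*n)).2).2 x
    rwa [ContinuousLinearMap.reApplyInnerSelf_apply] at h3
  have hgapS : δ • (1 : l2 H →L[ℂ] l2 H) ≤ diagOp s - A22 := gap_of_ge A11 A22 hgap' hA11s
  have hTunit : IsUnit (diagOp s - A22) := sp_isUnit hδ hgapS
  refine ⟨⟨δ, hδ, hgapS⟩, ?_⟩
  obtain ⟨C, hC⟩ := unif_bound (T := fun n => Sq (2*n)) (s := s) heven
  ext x
  set y := ContinuousLinearMap.adjoint A12 x with hy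
  set R := Ring.inverse (diagOp s - A22) with hR
  set Rn := fun n => Ring.inverse (diagOp (Sq (2*n)) - A22) with hRn
  have hgapn : ∀ n, δ • (1 : l2 H →L[ℂ] l2 H) ≤ diagOp (Sq (2*n)) - A22 :=
    fun n => gap_of_ge A11 A22 hgap' (props (2*n)).2
  have hunitn : ∀ n, IsUnit (diagOp (Sq (2*n)) - A22) := fun n => sp_isUnit hδ (hgapn n)
  have hdiff : ∀ n, Rn n - R = Rn n * diagOp (s - Sq (2*n)) * R := by
    intro n
    have e1 : diagOp (s - Sq (2*n)) = (diagOp s - A22) - (diagOp (Sq (2*n)) - A22) := by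
      rw [diagOp_sub']; abel
    have h1 : Rn n * (diagOp (Sq (2*n)) - A22) = 1 := Ring.inverse_mul_cancel _ (hunitn n)
    have h2 : (diagOp s - A22) * R = 1 := Ring.mul_inverse_cancel _ hTunit
    calc Rn n - R
        = Rn n * ((diagOp s - A22) * R) - (Rn n * (diagOp (Sq (2*n)) - A22)) * R := by
          rw [h1, h2, mul_one, one_mul]
      _ = Rn n * (diagOp s - A22) * R - Rn n * (diagOp (Sq (2*n)) - A22) * R := by
          noncomm_ring
      _ = Rn n * ((diagOp s - A22) - (diagOp (Sq (2*n)) - A22)) * R := by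
          noncomm_ring
      _ = Rn n * diagOp (s - Sq (2*n)) * R := by rw [← e1]
  have hz : Tendsto (fun n => diagOp (s - Sq (2*n)) (R y)) atTop (𝓝 0) := by
    refine diag_tendsto_zero _ (C := C) (fun n => ?_) (fun v => ?_) (R y)
    · rw [norm_sub_rev]; exact hC n
    · have h1 : Tendsto (fun n => (s - Sq (2*n)) v) atTop (𝓝 (s v - s v)) := by
        simp only [ContinuousLinearMap.sub_apply]
        exact tendsto_const_nhds.sub (heven v)
      rwa [sub_self] at h1
  have hRny : Tendsto (fun n => Rn n y) atTop (𝓝 (R y)) := by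
    rw [tendsto_iff_norm_sub_tendsto_zero]
    have hb : ∀ n, ‖Rn n y - R y‖ ≤ δ⁻¹ * ‖diagOp (s - Sq (2*n)) (R y)‖ := by
      intro n
      have e2 : Rn n y - R y = Rn n (diagOp (s - Sq (2*n)) (R y)) := by
        calc Rn n y - R y = (Rn n - R) y := by
              simp [ContinuousLinearMap.sub_apply]
        _ = (Rn n * diagOp (s - Sq (2*n)) * R) y := by rw [hdiff n]
        _ = Rn n (diagOp (s - Sq (2*n)) (R y)) := rfl
      rw [e2]
      exact sp_norm_inverse_apply_le hδ (hgapn n) _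
    refine squeeze_zero (fun n => norm_nonneg _) hb ?_
    have h4 := tendsto_zero_iff_norm_tendsto_zero.mp hz
    simpa using h4.const_mul δ⁻¹
  have h1 : Tendsto (fun n => riccatiMap A11 A12 A22 (Sq (2*n)) x) atTop
      (𝓝 (riccatiMap A11 A12 A22 s x)) := by
    simp only [riccatiMap, ContinuousLinearMap.add_apply, ContinuousLinearMap.comp_apply]
    exact tendsto_const_nhds.add ((A12.continuous.tendsto _).comp hRny)
  have h2 : Tendsto (fun n => riccatiMap A11 A12 A22 (Sq (2*n)) x) atTop (𝓝 (s x)) := by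
    have e3 : ∀ n, riccatiMap A11 A12 A22 (Sq (2*n)) x = Sq (2*n+1) x := fun n => rfl
    simp only [e3]
    exact hodd x
  exact tendsto_nhds_unique h1 h2
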